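/- Let μ > 0 and let p ∈ V_μ. Then G[p] ≥ G[p*], where p* is the shifted Bernoulli distribution with mean μ; that is, p* minimizes the Gini index over V_μ. -/

import Mathlib

/-- Cumulative distribution function of a pmf on ℕ: `F n = ∑_{m ≤ n} p m`. -/
noncomputable def cdf (p : ℕ → ℝ) (n : ℕ) : ℝ := ∑ m ∈ Finset.range (n + 1), p m

/-- Wasserstein-1 distance between two pmfs on ℕ, `W1(p,q) = ∑_{n ≥ 0} |F_n - H_n|`. -/
noncomputable def W1 (p q : ℕ → ℝ) : ℝ := ∑' n : ℕ, |cdf p n - cdf q n|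

/-- Gini index of a pmf on ℕ with mean μ: `G[p] = (1/(2μ)) ∑_i ∑_j |i-j| p_i p_j`. -/
noncomputable def Gini (μ : ℝ) (p : ℕ → ℝ) : ℝ :=
  (1 / (2 * μ)) * ∑' i : ℕ, ∑' j : ℕ, |(i : ℝ) - (j : ℝ)| * p i * p j

/-- The shifted Bernoulli distribution with mean μ:
`p*_{⌊μ⌋} = 1 - μ + ⌊μ⌋`, `p*_{⌊μ⌋+1} = μ - ⌊μ⌋`, `p*_n = 0` otherwise. -/
noncomputable def pstar (μ : ℝ) : ℕ → ℝ := fun n =>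
  if n = ⌊μ⌋₊ then 1 - μ + (⌊μ⌋₊ : ℝ)
  else if n = ⌊μ⌋₊ + 1 then μ - (⌊μ⌋₊ : ℝ)
  else 0

/-- The Dirac distribution on ℕ concentrated at `k`. -/
noncomputable def dirac (k : ℕ) : ℕ → ℝ := fun n => if n = k then 1 else 0

namespace GiniAux

open Finset Filter Topology

/-- Partial sum of a pmf. -/
noncomputable def Q (p : ℕ → ℝ) (N : ℕ) : ℝ := ∑ m ∈ range N, p m

lemma Q_succ (p : ℕ → ℝ) (N : ℕ) : Q p (N+1) = Q p N + p N := Finset.sum_range_succ p N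

/-- Merging two masses in `[0,1]` decreases the total of `f(x) = x(1-x)`. -/
lemma merge_lemma (t x : ℝ) (ht0 : 0 ≤ t) (ht1 : t ≤ 1) (hx0 : 0 ≤ x) (hx1 : x ≤ 1) :
    ∃ (j : ℕ) (u : ℝ), 0 ≤ u ∧ u ≤ 1 ∧ t + x = j + u ∧ u*(1-u) ≤ t*(1-t) + x*(1-x) := by
  rcases le_or_gt (t + x) 1 with h | h
  · exact ⟨0, t + x, by linarith, by linarith, by push_cast; ring, by nlinarith⟩
  · exact ⟨1, t + x - 1, by linarith, by linarith, by push_cast; ring, by nlinarith⟩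

lemma merged_sum (a : ℕ → ℝ) (ha0 : ∀ n, 0 ≤ a n) (ha1 : ∀ n, a n ≤ 1) (N : ℕ) :
    ∃ (k : ℕ) (t : ℝ), 0 ≤ t ∧ t ≤ 1 ∧ (∑ n ∈ range N, a n) = k + t ∧
      t*(1-t) ≤ ∑ n ∈ range N, a n * (1 - a n) := by
  induction N with
  | zero => exact ⟨0, 0, le_refl _, by norm_num, by simp, by simp⟩
  | succ N ih =>
    obtain ⟨k, t, ht0, ht1, hsum, hle⟩ := ih
    obtain ⟨j, u, hu0, hu1, hueq, hule⟩ := merge_lemma t (a N) ht0 ht1 (ha0 N) (ha1 N)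
    refine ⟨k + j, u, hu0, hu1, ?_, ?_⟩
    · rw [Finset.sum_range_succ, hsum]; push_cast; linarith
    · rw [Finset.sum_range_succ]; linarith

lemma S_identity (p : ℕ → ℝ) (N : ℕ) :
    ∑ n ∈ range N, (1 - Q p (n+1)) = N * (1 - Q p N) + ∑ m ∈ range N, (m : ℝ) * p m := by
  induction N with
  | zero => simp
  | succ N ih =>
    rw [Finset.sum_range_succ, ih, Finset.sum_range_succ (fun m => (m:ℝ) * p m), Q_succ]
    push_cast; ring

lemma wcount (p : ℕ → ℝ) (M : ℕ) :
    ∑ n ∈ range M, Q p (n+1) = ∑ i ∈ range M, ((M : ℝ) - i) * p i := by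
  induction M with
  | zero => simp
  | succ M ih =>
    rw [Finset.sum_range_succ, ih, Q_succ]
    push_cast
    rw [Finset.sum_range_succ (fun i => ((M:ℝ)+1 - i) * p i)]
    have : ∑ i ∈ range M, ((M:ℝ)+1 - i) * p i
        = ∑ i ∈ range M, (((M:ℝ) - i) * p i + p i) := by
      apply Finset.sum_congr rfl; intro i _; ring
    rw [this, Finset.sum_add_distrib]
    unfold Q
    ring

lemma D_identity (p : ℕ → ℝ) (M : ℕ) :
    ∑ i ∈ range M, ∑ j ∈ range M, |(i:ℝ) - j| * p i * p j
      = 2 * ∑ n ∈ range M, Q p (n+1) * (Q p M - Q p (n+1)) := by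
  induction M with
  | zero => simp
  | succ M ih =>
    have expand : ∑ i ∈ range (M+1), ∑ j ∈ range (M+1), |(i:ℝ) - j| * p i * p j
        = (∑ i ∈ range M, ∑ j ∈ range M, |(i:ℝ) - j| * p i * p j)
          + 2 * p M * ∑ i ∈ range M, ((M:ℝ) - i) * p i := by
      rw [Finset.sum_range_succ]
      have h1 : ∀ i ∈ range M, ∑ j ∈ range (M+1), |(i:ℝ) - j| * p i * p j
          = (∑ j ∈ range M, |(i:ℝ) - j| * p i * p j) + ((M:ℝ) - i) * p i * p M := by
        intro i hi
        rw [Finset.sum_range_succ]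
        have : |(i:ℝ) - M| = (M:ℝ) - i := by
          rw [abs_sub_comm, abs_of_nonneg]
          have := Finset.mem_range.mp hi
          have : (i:ℝ) ≤ M := by exact_mod_cast this.le
          linarith
        rw [this]
      rw [Finset.sum_congr rfl h1, Finset.sum_add_distrib, Finset.sum_range_succ]
      have h2 : ∑ j ∈ range M, |(M:ℝ) - j| * p M * p j
          = p M * ∑ i ∈ range M, ((M:ℝ) - i) * p i := by
        rw [Finset.mul_sum]
        apply Finset.sum_congr rfl; intro j hj
        have : |(M:ℝ) - j| = (M:ℝ) - j := by
          apply abs_of_nonneg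
          have := Finset.mem_range.mp hj
          have : (j:ℝ) ≤ M := by exact_mod_cast this.le
          linarith
        rw [this]; ring
      have h3 : ∑ i ∈ range M, ((M:ℝ) - i) * p i * p M
          = p M * ∑ i ∈ range M, ((M:ℝ) - i) * p i := by
        rw [Finset.mul_sum]; apply Finset.sum_congr rfl; intro i _; ring
      rw [h2, h3]; simp; ring
    rw [expand, ih, ← wcount]
    rw [Finset.sum_range_succ (fun n => Q p (n+1) * (Q p (M+1) - Q p (n+1)))]
    have : ∑ n ∈ range M, Q p (n+1) * (Q p (M+1) - Q p (n+1))
        = ∑ n ∈ range M, (Q p (n+1) * (Q p M - Q p (n+1)) + Q p (n+1) * p M) := by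
      apply Finset.sum_congr rfl; intro n _; rw [Q_succ p M]; ring
    rw [this, Finset.sum_add_distrib, ← Finset.sum_mul]
    ring

lemma tail_eq (p : ℕ → ℝ) (hsum : HasSum p 1) (N : ℕ) :
    1 - Q p N = ∑' i, p (i + N) := by
  have := Summable.sum_add_tsum_nat_add (f := p) N hsum.summable
  rw [hsum.tsum_eq] at this
  unfold Q; linarith

lemma S_tendsto (μ : ℝ) (p : ℕ → ℝ) (hpos : ∀ n, 0 ≤ p n) (hsum : HasSum p 1)
    (hmean : HasSum (fun n : ℕ => (n : ℝ) * p n) μ) :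
    Tendsto (fun N => ∑ n ∈ range N, (1 - Q p (n+1))) atTop (𝓝 μ) := by
  have hc : Tendsto (fun N => ∑ m ∈ range N, (m : ℝ) * p m) atTop (𝓝 μ) :=
    hmean.tendsto_sum_nat
  have key : ∀ N : ℕ, (∑ m ∈ range N, (m : ℝ) * p m) ≤ ∑ n ∈ range N, (1 - Q p (n+1))
      ∧ ∑ n ∈ range N, (1 - Q p (n+1)) ≤ μ := by
    intro N
    have htail : Summable (fun i => p (i + N)) := (summable_nat_add_iff N).2 hsum.summable
    have hmt : Summable (fun i : ℕ => ((i + N : ℕ) : ℝ) * p (i + N)) :=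
      (summable_nat_add_iff (f := fun n : ℕ => (n:ℝ) * p n) N).2 hmean.summable
    have h1 : (N : ℝ) * (1 - Q p N) = ∑' i, (N : ℝ) * p (i + N) := by
      rw [tail_eq p hsum N, tsum_mul_left]
    have h2 : ∑' i, (N : ℝ) * p (i + N) ≤ ∑' i : ℕ, ((i + N : ℕ) : ℝ) * p (i + N) := by
      apply Summable.tsum_le_tsum _ (htail.mul_left _) hmt
      intro i
      have : (N : ℝ) ≤ ((i + N : ℕ) : ℝ) := by exact_mod_cast Nat.le_add_left N i
      exact mul_le_mul_of_nonneg_right this (hpos _)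
    have h3 : (∑ m ∈ range N, (m : ℝ) * p m) + ∑' i : ℕ, ((i + N : ℕ) : ℝ) * p (i + N) = μ := by
      have := Summable.sum_add_tsum_nat_add (f := fun n : ℕ => (n:ℝ) * p n) N hmean.summable
      rw [hmean.tsum_eq] at this; exact this
    have h0 : 0 ≤ (N : ℝ) * (1 - Q p N) := by
      rw [h1]
      exact tsum_nonneg fun i => mul_nonneg (Nat.cast_nonneg N) (hpos _)
    rw [S_identity]
    constructor
    · linarith
    · have : (N : ℝ) * (1 - Q p N) ≤ μ - ∑ m ∈ range N, (m : ℝ) * p m := by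
        rw [h1]; linarith
      linarith
  exact tendsto_of_tendsto_of_tendsto_of_le_of_le hc tendsto_const_nhds
    (fun N => (key N).1) (fun N => (key N).2)

lemma abs_bound (i j : ℕ) (p : ℕ → ℝ) (hpos : ∀ n, 0 ≤ p n) :
    |(i:ℝ) - j| * p i * p j ≤ p i * ((i:ℝ) * p j) + p i * ((j:ℝ) * p j) := by
  have habs : |(i:ℝ) - j| ≤ (i:ℝ) + j := by
    rw [abs_le]
    constructor <;> nlinarith [Nat.cast_nonneg (α := ℝ) i, Nat.cast_nonneg (α := ℝ) j]
  have h := mul_le_mul_of_nonneg_right habs (mul_nonneg (hpos i) (hpos j))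
  nlinarith [h]

lemma inner_summable (μ : ℝ) (p : ℕ → ℝ) (hpos : ∀ n, 0 ≤ p n) (hsum : HasSum p 1)
    (hmean : HasSum (fun n : ℕ => (n : ℝ) * p n) μ) (i : ℕ) :
    Summable (fun j : ℕ => |(i:ℝ) - j| * p i * p j) := by
  refine Summable.of_nonneg_of_le
    (fun j => mul_nonneg (mul_nonneg (abs_nonneg _) (hpos i)) (hpos j))
    (fun j => abs_bound i j p hpos) ?_
  exact ((hsum.summable.mul_left _).mul_left (p i)).add
    ((hmean.summable.mul_left (p i)))

lemma inner_le (μ : ℝ) (p : ℕ → ℝ) (hpos : ∀ n, 0 ≤ p n) (hsum : HasSum p 1)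
    (hmean : HasSum (fun n : ℕ => (n : ℝ) * p n) μ) (i : ℕ) :
    ∑' j : ℕ, |(i:ℝ) - j| * p i * p j ≤ (i:ℝ) * p i + μ * p i := by
  have hb : HasSum (fun j : ℕ => p i * ((i:ℝ) * p j) + p i * ((j:ℝ) * p j))
      (p i * ((i:ℝ) * 1) + p i * μ) :=
    ((hsum.mul_left _).mul_left (p i)).add (hmean.mul_left (p i))
  have h := Summable.tsum_le_tsum (fun j => abs_bound i j p hpos)
    (inner_summable μ p hpos hsum hmean i) hb.summable
  rw [hb.tsum_eq] at h
  linarith [h]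

lemma outer_summable (μ : ℝ) (p : ℕ → ℝ) (hpos : ∀ n, 0 ≤ p n) (hsum : HasSum p 1)
    (hmean : HasSum (fun n : ℕ => (n : ℝ) * p n) μ) :
    Summable (fun i : ℕ => ∑' j : ℕ, |(i:ℝ) - j| * p i * p j) := by
  refine Summable.of_nonneg_of_le
    (fun i => tsum_nonneg fun j => mul_nonneg (mul_nonneg (abs_nonneg _) (hpos i)) (hpos j))
    (fun i => inner_le μ p hpos hsum hmean i) ?_
  exact hmean.summable.add (hsum.summable.mul_left μ)

lemma T_ge_DM (μ : ℝ) (p : ℕ → ℝ) (hpos : ∀ n, 0 ≤ p n) (hsum : HasSum p 1)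
    (hmean : HasSum (fun n : ℕ => (n : ℝ) * p n) μ) (M : ℕ) :
    ∑ i ∈ range M, ∑ j ∈ range M, |(i:ℝ) - j| * p i * p j
      ≤ ∑' i : ℕ, ∑' j : ℕ, |(i:ℝ) - j| * p i * p j := by
  have step1 : ∑ i ∈ range M, ∑ j ∈ range M, |(i:ℝ) - j| * p i * p j
      ≤ ∑ i ∈ range M, ∑' j : ℕ, |(i:ℝ) - j| * p i * p j := by
    apply Finset.sum_le_sum
    intro i _
    exact Summable.sum_le_tsum (range M)
      (fun j _ => mul_nonneg (mul_nonneg (abs_nonneg _) (hpos i)) (hpos j))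
      (inner_summable μ p hpos hsum hmean i)
  refine step1.trans ?_
  exact Summable.sum_le_tsum (range M)
    (fun i _ => tsum_nonneg fun j => mul_nonneg (mul_nonneg (abs_nonneg _) (hpos i)) (hpos j))
    (outer_summable μ p hpos hsum hmean)

lemma pstar_tsum (μ : ℝ) :
    ∑' i : ℕ, ∑' j : ℕ, |(i:ℝ) - j| * pstar μ i * pstar μ j
      = 2 * (μ - ⌊μ⌋₊) * (1 - (μ - ⌊μ⌋₊)) := by
  set m := ⌊μ⌋₊ with hm
  have hzero : ∀ n, n ∉ ({m, m+1} : Finset ℕ) → pstar μ n = 0 := by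
    intro n hn
    simp only [Finset.mem_insert, Finset.mem_singleton] at hn
    push_neg at hn
    unfold pstar
    rw [if_neg hn.1, if_neg hn.2]
  have hinner : ∀ i : ℕ, ∑' j : ℕ, |(i:ℝ) - j| * pstar μ i * pstar μ j
      = ∑ j ∈ ({m, m+1} : Finset ℕ), |(i:ℝ) - j| * pstar μ i * pstar μ j := by
    intro i
    apply tsum_eq_sum
    intro j hj
    rw [hzero j hj]; ring
  have houter : ∑' i : ℕ, (∑ j ∈ ({m, m+1} : Finset ℕ), |(i:ℝ) - j| * pstar μ i * pstar μ j)
      = ∑ i ∈ ({m, m+1} : Finset ℕ), ∑ j ∈ ({m, m+1} : Finset ℕ),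
          |(i:ℝ) - j| * pstar μ i * pstar μ j := by
    apply tsum_eq_sum
    intro i hi
    apply Finset.sum_eq_zero
    intro j _
    rw [hzero i hi]; ring
  calc ∑' i : ℕ, ∑' j : ℕ, |(i:ℝ) - j| * pstar μ i * pstar μ j
      = ∑' i : ℕ, (∑ j ∈ ({m, m+1} : Finset ℕ), |(i:ℝ) - j| * pstar μ i * pstar μ j) :=
        tsum_congr hinner
    _ = ∑ i ∈ ({m, m+1} : Finset ℕ), ∑ j ∈ ({m, m+1} : Finset ℕ),
          |(i:ℝ) - j| * pstar μ i * pstar μ j := houter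
    _ = 2 * (μ - m) * (1 - (μ - m)) := by
        have hne : m ≠ m + 1 := by omega
        rw [Finset.sum_pair hne, Finset.sum_pair hne, Finset.sum_pair hne]
        have e1 : pstar μ m = 1 - μ + m := by unfold pstar; rw [if_pos rfl]
        have e2 : pstar μ (m+1) = μ - m := by
          unfold pstar; rw [if_neg (by omega), if_pos rfl]
        have e3 : |(m:ℝ) - (m:ℝ)| = 0 := by simp
        have e4 : |(m:ℝ) - ((m+1:ℕ):ℝ)| = 1 := by push_cast; rw [abs_of_nonpos] <;> norm_num
        have e5 : |((m+1:ℕ):ℝ) - (m:ℝ)| = 1 := by push_cast; rw [abs_of_nonneg] <;> norm_num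
        have e6 : |((m+1:ℕ):ℝ) - ((m+1:ℕ):ℝ)| = 0 := by simp
        rw [e1, e2, e3, e4, e5, e6]
        ring

end GiniAux

theorem stmt_16 (μ : ℝ) (hμ : 0 < μ) (p : ℕ → ℝ)
    (hpos : ∀ n, 0 ≤ p n) (hsum : HasSum p 1)
    (hmean : HasSum (fun n : ℕ => (n : ℝ) * p n) μ) :
    Gini μ p ≥ Gini μ (pstar μ) := by
  open GiniAux Finset Filter Topology in
  have hmle : ((⌊μ⌋₊ : ℕ) : ℝ) ≤ μ := Nat.floor_le hμ.le
  have hmlt : μ < ((⌊μ⌋₊ : ℕ) : ℝ) + 1 := Nat.lt_floor_add_one μ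
  -- basic bounds on Q
  have hQ0 : ∀ k, 0 ≤ GiniAux.Q p k := fun k => Finset.sum_nonneg fun i _ => hpos i
  have hQ1 : ∀ k, GiniAux.Q p k ≤ 1 := fun k =>
    sum_le_hasSum (Finset.range k) (fun i _ => hpos i) hsum
  have hQmono : ∀ {j k : ℕ}, j ≤ k → GiniAux.Q p j ≤ GiniAux.Q p k := fun {j k} hjk =>
    Finset.sum_le_sum_of_subset_of_nonneg (Finset.range_subset_range.2 hjk) (fun i _ _ => hpos i)
  have hQtend : Filter.Tendsto (fun M => GiniAux.Q p M) Filter.atTop (nhds 1) :=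
    hsum.tendsto_sum_nat
  -- T and its lower bounds
  have hTnn : 0 ≤ ∑' i : ℕ, ∑' j : ℕ, |(i:ℝ) - j| * p i * p j :=
    tsum_nonneg fun i => tsum_nonneg fun j =>
      mul_nonneg (mul_nonneg (abs_nonneg _) (hpos i)) (hpos j)
  have stepA : ∀ N : ℕ,
      2 * ∑ n ∈ Finset.range N, GiniAux.Q p (n+1) * (1 - GiniAux.Q p (n+1))
        ≤ ∑' i : ℕ, ∑' j : ℕ, |(i:ℝ) - j| * p i * p j := by
    intro N
    have hMbound : ∀ᶠ M in Filter.atTop,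
        2 * ∑ n ∈ Finset.range N, GiniAux.Q p (n+1) * (GiniAux.Q p M - GiniAux.Q p (n+1))
          ≤ ∑' i : ℕ, ∑' j : ℕ, |(i:ℝ) - j| * p i * p j := by
      filter_upwards [Filter.eventually_ge_atTop N] with M hNM
      have h1 : ∑ n ∈ Finset.range N, GiniAux.Q p (n+1) * (GiniAux.Q p M - GiniAux.Q p (n+1))
          ≤ ∑ n ∈ Finset.range M, GiniAux.Q p (n+1) * (GiniAux.Q p M - GiniAux.Q p (n+1)) := by
        apply Finset.sum_le_sum_of_subset_of_nonneg (Finset.range_subset_range.2 hNM)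
        intro n hn _
        have hn' : n + 1 ≤ M := Finset.mem_range.1 hn
        have := hQmono hn'
        exact mul_nonneg (hQ0 _) (by linarith)
      have h3 := GiniAux.T_ge_DM μ p hpos hsum hmean M
      rw [GiniAux.D_identity p M] at h3
      linarith
    have hcont : Filter.Tendsto
        (fun M => 2 * ∑ n ∈ Finset.range N,
          GiniAux.Q p (n+1) * (GiniAux.Q p M - GiniAux.Q p (n+1)))
        Filter.atTop
        (nhds (2 * ∑ n ∈ Finset.range N, GiniAux.Q p (n+1) * (1 - GiniAux.Q p (n+1)))) := by
      apply Filter.Tendsto.const_mul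
      apply tendsto_finset_sum
      intro n _
      exact (hQtend.sub_const (GiniAux.Q p (n+1))).const_mul (GiniAux.Q p (n+1))
    exact le_of_tendsto hcont hMbound
  -- merged form of the lower bound
  have stepB : ∀ N : ℕ, ∃ (k : ℕ) (t : ℝ), 0 ≤ t ∧ t ≤ 1 ∧
      (∑ n ∈ Finset.range N, (1 - GiniAux.Q p (n+1))) = k + t ∧
      2 * (t * (1 - t)) ≤ ∑' i : ℕ, ∑' j : ℕ, |(i:ℝ) - j| * p i * p j := by
    intro N
    obtain ⟨k, t, h0, h1, he, hle⟩ := GiniAux.merged_sum (fun n => 1 - GiniAux.Q p (n+1))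
      (fun n => by have := hQ1 (n+1); linarith)
      (fun n => by have := hQ0 (n+1); linarith) N
    refine ⟨k, t, h0, h1, he, ?_⟩
    have hA := stepA N
    have heq : ∑ n ∈ Finset.range N, (1 - GiniAux.Q p (n+1)) * (1 - (1 - GiniAux.Q p (n+1)))
        = ∑ n ∈ Finset.range N, GiniAux.Q p (n+1) * (1 - GiniAux.Q p (n+1)) :=
      Finset.sum_congr rfl (fun n _ => by ring)
    rw [heq] at hle
    linarith
  -- main inequality : 2θ(1-θ) ≤ T
  have hmain : 2 * (μ - ⌊μ⌋₊) * (1 - (μ - ⌊μ⌋₊))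
      ≤ ∑' i : ℕ, ∑' j : ℕ, |(i:ℝ) - j| * p i * p j := by
    rcases eq_or_lt_of_le (by linarith : (0:ℝ) ≤ μ - ⌊μ⌋₊) with hθ | hθ
    · rw [← hθ]; simpa using hTnn
    · -- θ > 0
      have hStend := GiniAux.S_tendsto μ p hpos hsum hmean
      have hSmono : Monotone (fun N => ∑ n ∈ Finset.range N, (1 - GiniAux.Q p (n+1))) := by
        apply monotone_nat_of_le_succ
        intro N
        rw [Finset.sum_range_succ]
        have := hQ1 (N+1); linarith
      have hSle : ∀ N, (∑ n ∈ Finset.range N, (1 - GiniAux.Q p (n+1))) ≤ μ :=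
        fun N => hSmono.ge_of_tendsto hStend N
      have hev : ∀ᶠ N in Filter.atTop,
          ((⌊μ⌋₊:ℕ):ℝ) < ∑ n ∈ Finset.range N, (1 - GiniAux.Q p (n+1)) :=
        hStend.eventually_const_lt (by linarith)
      have hev2 : ∀ᶠ N in Filter.atTop,
          2 * (((∑ n ∈ Finset.range N, (1 - GiniAux.Q p (n+1))) - ⌊μ⌋₊)
            * (1 - ((∑ n ∈ Finset.range N, (1 - GiniAux.Q p (n+1))) - ⌊μ⌋₊)))
            ≤ ∑' i : ℕ, ∑' j : ℕ, |(i:ℝ) - j| * p i * p j := by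
        filter_upwards [hev] with N hN
        obtain ⟨k, t, h0, h1, he, hle⟩ := stepB N
        have hSleN := hSle N
        have hk : k = ⌊μ⌋₊ := by
          have hk1 : k ≤ ⌊μ⌋₊ := by
            by_contra hc; push_neg at hc
            have : ((⌊μ⌋₊:ℕ):ℝ) + 1 ≤ (k:ℝ) := by exact_mod_cast hc
            linarith
          have hk2 : ⌊μ⌋₊ ≤ k := by
            by_contra hc; push_neg at hc
            have : (k:ℝ) + 1 ≤ ((⌊μ⌋₊:ℕ):ℝ) := by exact_mod_cast hc
            linarith
          omega
        rw [hk] at he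
        have ht : t = (∑ n ∈ Finset.range N, (1 - GiniAux.Q p (n+1))) - ⌊μ⌋₊ := by linarith
        rw [← ht]
        exact hle
      have hlim : Filter.Tendsto
          (fun N => 2 * (((∑ n ∈ Finset.range N, (1 - GiniAux.Q p (n+1))) - (⌊μ⌋₊:ℝ))
            * (1 - ((∑ n ∈ Finset.range N, (1 - GiniAux.Q p (n+1))) - (⌊μ⌋₊:ℝ)))))
          Filter.atTop (nhds (2 * ((μ - ⌊μ⌋₊) * (1 - (μ - ⌊μ⌋₊))))) := by
        have h1 : Filter.Tendsto
            (fun N => (∑ n ∈ Finset.range N, (1 - GiniAux.Q p (n+1))) - (⌊μ⌋₊:ℝ))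
            Filter.atTop (nhds (μ - ⌊μ⌋₊)) := hStend.sub_const _
        exact (h1.mul (tendsto_const_nhds.sub h1)).const_mul 2
      have := le_of_tendsto hlim hev2
      linarith
  -- conclude
  unfold Gini
  rw [ge_iff_le, GiniAux.pstar_tsum μ]
  have hc : 0 ≤ 1 / (2 * μ) := by positivity
  exact mul_le_mul_of_nonneg_left hmain hc
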